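/- There exists a constant c_1 such that for all positive integers k and m, the sum over all k-tuples (y_1,...,y_k) of positive integers with y_1 + ··· + y_k = m of 1/(y_1 y_2 ··· y_k) is at most (c_1 ln m)^{k−1}/m. (For k > m the left side is an empty sum, hence 0; for k = m = 1 the right side 0^0 is interpreted as 1.) -/

import Mathlib

noncomputable def Sc (k m : ℕ) : ℝ :=
  ∑ y ∈ (Finset.Nat.antidiagonalTuple k m).filter (fun y => ∀ i, 0 < y i),
      (∏ i : Fin k, ((y i : ℕ) : ℝ))⁻¹

lemma Sc_zero (k : ℕ) (hk : 1 ≤ k) : Sc k 0 = 0 := by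
  unfold Sc
  rw [Finset.Nat.antidiagonalTuple_zero_right, Finset.filter_singleton]
  rw [if_neg]
  · simp
  · intro h
    exact absurd (h ⟨0, hk⟩) (by simp)

lemma Sc_one (m : ℕ) (hm : 1 ≤ m) : Sc 1 m = (m : ℝ)⁻¹ := by
  unfold Sc
  rw [Finset.Nat.antidiagonalTuple_one, Finset.filter_singleton, if_pos]
  · simp
  · intro i
    fin_cases i
    simpa using (show 0 < m from hm)

lemma Sc_rec (k m : ℕ) :
    Sc (k + 1) m = ∑ a ∈ Finset.Icc 1 m, (a : ℝ)⁻¹ * Sc k (m - a) := by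
  unfold Sc
  simp_rw [Finset.mul_sum]
  rw [Finset.sum_sigma']
  refine Finset.sum_nbij' (fun y => (⟨y 0, Fin.tail y⟩ : (_ : ℕ) × (Fin k → ℕ)))
    (fun p => Fin.cons p.1 p.2) ?_ ?_ ?_ ?_ ?_
  · intro y hy
    simp only [Finset.mem_sigma, Finset.mem_Icc, Finset.mem_filter,
      Finset.Nat.mem_antidiagonalTuple] at hy ⊢
    obtain ⟨hsum, hpos⟩ := hy
    rw [Fin.sum_univ_succ] at hsum
    refine ⟨⟨hpos 0, by omega⟩, ?_, fun j => hpos j.succ⟩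
    simp only [Fin.tail]
    omega
  · rintro ⟨a, y⟩ hp
    simp only [Finset.mem_sigma, Finset.mem_Icc, Finset.mem_filter,
      Finset.Nat.mem_antidiagonalTuple] at hp ⊢
    obtain ⟨⟨ha1, ham⟩, hsum, hpos⟩ := hp
    refine ⟨?_, ?_⟩
    · rw [Fin.sum_cons, hsum]; omega
    · intro i
      refine Fin.cases ?_ ?_ i
      · simpa using (show 0 < a from ha1)
      · intro j; simpa using hpos j
  · intro y _
    exact Fin.cons_self_tail y
  · rintro ⟨a, y⟩ _
    simp [Fin.tail_cons]
  · intro y _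
    dsimp only
    rw [Fin.prod_univ_succ]
    simp only [Fin.tail, mul_inv]
    try ring

lemma harmonic_sum_le (m : ℕ) :
    ∑ a ∈ Finset.Icc 1 m, (a : ℝ)⁻¹ ≤ 1 + Real.log m := by
  have h := harmonic_le_one_add_log m
  rw [harmonic_eq_sum_Icc] at h
  calc ∑ a ∈ Finset.Icc 1 m, (a : ℝ)⁻¹
      = ((∑ i ∈ Finset.Icc 1 m, (i : ℚ)⁻¹ : ℚ) : ℝ) := by push_cast; ring
    _ ≤ 1 + Real.log m := h

lemma reflect_sum (m : ℕ) (hm : 1 ≤ m) :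
    ∑ a ∈ Finset.Icc 1 m, ((m - a : ℕ) : ℝ)⁻¹ ≤ ∑ a ∈ Finset.Icc 1 m, (a : ℝ)⁻¹ := by
  have h1 : ∑ a ∈ Finset.Icc 1 m, ((m - a : ℕ) : ℝ)⁻¹
      = ∑ b ∈ Finset.Icc 0 (m - 1), (b : ℝ)⁻¹ := by
    refine Finset.sum_nbij' (fun a => m - a) (fun b => m - b) ?_ ?_ ?_ ?_ ?_
    · intro a ha; simp only [Finset.mem_Icc] at *; omega
    · intro b hb; simp only [Finset.mem_Icc] at *; omega
    · intro a ha; simp only [Finset.mem_Icc] at ha; show m - (m - a) = a; omega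
    · intro b hb; simp only [Finset.mem_Icc] at hb; show m - (m - b) = b; omega
    · intro a ha; rfl
  rw [h1]
  have h2 : Finset.Icc 0 (m - 1) = insert 0 (Finset.Icc 1 (m - 1)) := by
    ext x; simp only [Finset.mem_Icc, Finset.mem_insert]; omega
  rw [h2, Finset.sum_insert (by simp)]
  simp only [Nat.cast_zero, inv_zero, zero_add]
  refine Finset.sum_le_sum_of_subset_of_nonneg ?_ ?_
  · intro x hx; simp only [Finset.mem_Icc] at *; omega
  · intros; positivity

lemma Sc_bound (k : ℕ) (hk : 1 ≤ k) : ∀ m : ℕ, 1 ≤ m →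
    Sc k m ≤ (6 * Real.log m) ^ (k - 1) / m := by
  induction k with
  | zero => omega
  | succ k ih =>
    intro m hm
    rcases Nat.eq_zero_or_pos k with rfl | hk1
    · rw [Sc_one m hm]
      norm_num
    have ih' := ih hk1
    rcases eq_or_lt_of_le hm with hm1 | hm2
    · -- m = 1
      rw [← hm1, Sc_rec]
      simp only [Nat.add_sub_cancel]
      rw [show Finset.Icc 1 1 = {1} from rfl, Finset.sum_singleton,
        Sc_zero k hk1, mul_zero, Nat.cast_one, Real.log_one, mul_zero,
        zero_pow (by omega), zero_div]
    -- m ≥ 2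
    have hm2' : (2 : ℕ) ≤ m := hm2
    have hm2R : (2 : ℝ) ≤ (m : ℝ) := by exact_mod_cast hm2'
    have hm1R : (1 : ℝ) ≤ (m : ℝ) := by linarith
    have hmpos : (0 : ℝ) < (m : ℝ) := by linarith
    have hlog0 : 0 ≤ Real.log m := Real.log_nonneg hm1R
    have hlog2 : Real.log 2 ≤ Real.log m := Real.log_le_log (by norm_num) hm2R
    have hloghalf : (1 : ℝ) ≤ 2 * Real.log m := by
      have h2 := Real.log_two_gt_d9
      linarith
    set C := (6 * Real.log m) ^ (k - 1) with hC
    have hC0 : 0 ≤ C := by positivity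
    rw [Sc_rec]
    have step1 : ∑ a ∈ Finset.Icc 1 m, (a : ℝ)⁻¹ * Sc k (m - a)
        ≤ ∑ a ∈ Finset.Icc 1 m, C * (m : ℝ)⁻¹ * ((a : ℝ)⁻¹ + ((m - a : ℕ) : ℝ)⁻¹) := by
      refine Finset.sum_le_sum ?_
      intro a ha
      simp only [Finset.mem_Icc] at ha
      rcases eq_or_lt_of_le ha.2 with rfl | ham
      · rw [Nat.sub_self, Sc_zero k hk1, mul_zero]
        positivity
      · have h1a : (0 : ℝ) < (a : ℝ) := by exact_mod_cast ha.1
        have hma : 1 ≤ m - a := by omega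
        have hmaR : (0 : ℝ) < ((m - a : ℕ) : ℝ) := by exact_mod_cast hma
        have hsub : ((m - a : ℕ) : ℝ) = (m : ℝ) - (a : ℝ) := by
          push_cast [Nat.cast_sub ha.2]
          ring
        have hb := ih' (m - a) hma
        have hlogle : Real.log ((m - a : ℕ) : ℝ) ≤ Real.log m :=
          Real.log_le_log hmaR (by exact_mod_cast Nat.sub_le m a)
        have hpow : (6 * Real.log ((m - a : ℕ) : ℝ)) ^ (k - 1) ≤ C := by
          rw [hC]
          have hl0 : 0 ≤ Real.log ((m - a : ℕ) : ℝ) :=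
            Real.log_nonneg (by exact_mod_cast hma)
          exact pow_le_pow_left₀ (by linarith) (by linarith) _
        calc (a : ℝ)⁻¹ * Sc k (m - a) ≤ (a : ℝ)⁻¹ * (C / ((m - a : ℕ) : ℝ)) := by
              refine mul_le_mul_of_nonneg_left ?_ (by positivity)
              exact hb.trans (by gcongr)
          _ = C * (m : ℝ)⁻¹ * ((a : ℝ)⁻¹ + ((m - a : ℕ) : ℝ)⁻¹) := by
              rw [hsub]
              have hane : (a : ℝ) ≠ 0 := ne_of_gt h1a
              have hmane : (m : ℝ) - (a : ℝ) ≠ 0 := by rw [← hsub]; exact ne_of_gt hmaR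
              have hmne : (m : ℝ) ≠ 0 := ne_of_gt hmpos
              field_simp
              try ring
    have step2 : ∑ a ∈ Finset.Icc 1 m, C * (m : ℝ)⁻¹ * ((a : ℝ)⁻¹ + ((m - a : ℕ) : ℝ)⁻¹)
        = C * (m : ℝ)⁻¹ * ((∑ a ∈ Finset.Icc 1 m, (a : ℝ)⁻¹)
            + ∑ a ∈ Finset.Icc 1 m, ((m - a : ℕ) : ℝ)⁻¹) := by
      rw [← Finset.mul_sum, Finset.sum_add_distrib]
    have hH := harmonic_sum_le m
    have hH' := reflect_sum m hm
    have step3 : C * (m : ℝ)⁻¹ * ((∑ a ∈ Finset.Icc 1 m, (a : ℝ)⁻¹)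
            + ∑ a ∈ Finset.Icc 1 m, ((m - a : ℕ) : ℝ)⁻¹)
        ≤ C * (m : ℝ)⁻¹ * (6 * Real.log m) := by
      refine mul_le_mul_of_nonneg_left ?_ (by positivity)
      linarith
    have hkk : k - 1 + 1 = k := Nat.succ_pred_eq_of_pos hk1
    have hps : (6 * Real.log m) ^ k = (6 * Real.log m) ^ (k - 1) * (6 * Real.log m) := by
      rw [← pow_succ, hkk]
    have final : C * (m : ℝ)⁻¹ * (6 * Real.log m)
        = (6 * Real.log m) ^ (k + 1 - 1) / (m : ℝ) := by
      rw [Nat.add_sub_cancel, hps, hC, div_eq_mul_inv]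
      ring
    calc ∑ a ∈ Finset.Icc 1 m, (a : ℝ)⁻¹ * Sc k (m - a)
        ≤ _ := step1
      _ = _ := step2
      _ ≤ _ := step3
      _ = _ := final

theorem composition_harmonic_sum_bound :
    ∃ c₁ : ℝ, 0 < c₁ ∧
      ∀ k m : ℕ, 1 ≤ k → 1 ≤ m →
        ∑ y ∈ (Finset.Nat.antidiagonalTuple k m).filter (fun y => ∀ i, 0 < y i),
            (∏ i : Fin k, ((y i : ℕ) : ℝ))⁻¹ ≤
          (c₁ * Real.log m) ^ (k - 1) / m := by
  exact ⟨6, by norm_num, fun k m hk hm => Sc_bound k hk m hm⟩
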